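/- arXiv:1503.02859 — 5 statements merged into one kernel-verified Lean document; each statement's English description precedes it below -/
import Mathlib

section
/- The dimension of a simple game v is at most the number of its maximal losing coalitions. -/
def IsSimpleGame {N : Type*} [Fintype N] (v : Finset N → Prop) : Prop :=
  (∀ S T : Finset N, S ⊆ T → v S → v T) ∧ ¬ v ∅ ∧ v Finset.univ

def IsWeighted {N : Type*} [Fintype N] (v : Finset N → Prop) : Prop :=
  ∃ (w : N → ℝ) (q : ℝ), 0 < q ∧ (∀ i, 0 ≤ w i) ∧ ∀ S : Finset N, v S ↔ q ≤ ∑ i ∈ S, w i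

def IsMaxLosing {N : Type*} [Fintype N] (v : Finset N → Prop) (T : Finset N) : Prop :=
  ¬ v T ∧ ∀ T' : Finset N, T ⊂ T' → v T'

def IsMinWinning {N : Type*} [Fintype N] (v : Finset N → Prop) (S : Finset N) : Prop :=
  v S ∧ ∀ S' : Finset N, S' ⊂ S → ¬ v S'

lemma exists_maxLosing_superset {N : Type*} [Fintype N] [DecidableEq N]
    (v : Finset N → Prop) (S : Finset N) (hS : ¬ v S) :
    ∃ T : Finset N, S ⊆ T ∧ IsMaxLosing v T := by
  classical
  obtain ⟨T, hST, hmax⟩ :=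
    Finite.exists_le_maximal (p := fun T => S ⊆ T ∧ ¬ v T) ⟨subset_rfl, hS⟩
  refine ⟨T, hmax.1.1, hmax.1.2, fun T' hT' => ?_⟩
  by_contra hvT'
  exact hT'.not_subset (hmax.2 ⟨hmax.1.1.trans hT'.subset, hvT'⟩ hT'.subset)

/-- The dimension of a simple game is at most the number of its maximal losing
coalitions: there is a representation as the intersection of at most that many
weighted games. -/
theorem dimension_le_card_maximal_losing {N : Type*} [Fintype N] [DecidableEq N]
    (v : Finset N → Prop) (hv : IsSimpleGame v) :
    ∃ k : ℕ, k ≤ {T : Finset N | IsMaxLosing v T}.ncard ∧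
      ∃ u : Fin k → (Finset N → Prop),
        (∀ l, IsWeighted (u l)) ∧ ∀ S : Finset N, v S ↔ ∀ l, u l S := by
  classical
  obtain ⟨hmono, -, -⟩ := hv
  have hfin : ({T : Finset N | IsMaxLosing v T}).Finite := Set.toFinite _
  set s : Finset (Finset N) := hfin.toFinset with hs
  let e := s.equivFin
  refine ⟨s.card, le_of_eq (Set.ncard_eq_toFinset_card _ hfin).symm,
    fun l S => ¬ S ⊆ (e.symm l : Finset N), fun l => ?_, fun S => ?_⟩
  · -- weighted
    set T : Finset N := (e.symm l : Finset N)
    refine ⟨fun i => if i ∈ T then 0 else 1, 1, one_pos, fun i => by positivity, fun S => ?_⟩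
    have hsum : ∑ i ∈ S, (if i ∈ T then (0:ℝ) else 1) = ((S \ T).card : ℝ) := by
      rw [Finset.sum_ite, Finset.sum_const, Finset.sum_const]
      simp [Finset.sdiff_eq_filter]
    rw [hsum]
    constructor
    · intro h
      have : (S \ T).Nonempty := Finset.sdiff_nonempty.mpr h
      have := Finset.card_pos.mpr this
      exact_mod_cast this
    · intro h hsub
      have : (0:ℝ) < ((S \ T).card : ℝ) := lt_of_lt_of_le one_pos h |>.trans_le le_rfl
      have hpos : 0 < (S \ T).card := by exact_mod_cast this
      exact Finset.sdiff_nonempty.mp (Finset.card_pos.mp hpos) hsub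
  · constructor
    · intro hvS l hsub
      have hT : IsMaxLosing v (e.symm l : Finset N) :=
        hfin.mem_toFinset.mp (e.symm l).2
      exact hT.1 (hmono S _ hsub hvS)
    · intro h
      by_contra hvS
      obtain ⟨T, hST, hT⟩ := exists_maxLosing_superset v S hvS
      have hTs : T ∈ s := hfin.mem_toFinset.mpr hT
      have := h (e ⟨T, hTs⟩)
      simp only [Equiv.symm_apply_apply] at this
      exact this hST
end

section
/- Every simple game on a finite player set has finite dimension, i.e., it can be written as the intersection of finitely many weighted games. -/
open Classical in
/-- The weighted game "not a subset of T". -/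
lemma weighted_notsubset {N : Type*} [Fintype N] [DecidableEq N] (T : Finset N) :
    IsWeighted (fun S : Finset N => ¬ S ⊆ T) := by
  refine ⟨fun i => if i ∈ T then 0 else 1, 1, one_pos, fun i => by positivity, fun S => ?_⟩
  have hsum : ∑ i ∈ S, (if i ∈ T then (0:ℝ) else 1) = (S.filter (fun i => i ∉ T)).card := by
    rw [Finset.sum_ite, Finset.sum_const, Finset.sum_const]
    simp
  rw [hsum]
  constructor
  · intro h
    obtain ⟨x, hxS, hxT⟩ := Finset.not_subset.mp h
    have : 0 < (S.filter (fun i => i ∉ T)).card :=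
      Finset.card_pos.mpr ⟨x, Finset.mem_filter.mpr ⟨hxS, hxT⟩⟩
    exact_mod_cast this
  · intro h hsub
    have : (S.filter (fun i => i ∉ T)).card = 0 := by
      rw [Finset.card_eq_zero, Finset.filter_eq_empty_iff]
      intro x hx
      simpa using hsub hx
    rw [this] at h
    norm_num at h

open Classical in
lemma exists_maxLosing {N : Type*} [Fintype N] (v : Finset N → Prop)
    (S : Finset N) (hS : ¬ v S) : ∃ T, IsMaxLosing v T ∧ S ⊆ T := by
  classical
  let F : Finset (Finset N) := Finset.univ.filter (fun T => ¬ v T ∧ S ⊆ T)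
  have hSF : S ∈ F := by simp [F, hS]
  obtain ⟨T, hTF, hmax⟩ := F.exists_max_image Finset.card ⟨S, hSF⟩
  simp only [F, Finset.mem_filter] at hTF
  refine ⟨T, ⟨hTF.2.1, fun T' hT' => ?_⟩, hTF.2.2⟩
  by_contra hvT'
  have hT'F : T' ∈ F := by
    simp only [F, Finset.mem_filter]
    exact ⟨Finset.mem_univ _, hvT', hTF.2.2.trans hT'.subset⟩
  have := hmax T' hT'F
  have := Finset.card_lt_card hT'
  omega

/-- Every simple game on a finite player set has finite dimension: it is the
intersection of finitely many weighted games. -/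
theorem finite_dimension {N : Type*} [Fintype N] [DecidableEq N]
    (v : Finset N → Prop) (hv : IsSimpleGame v) :
    ∃ (k : ℕ) (u : Fin k → (Finset N → Prop)),
      (∀ l, IsWeighted (u l)) ∧ ∀ S : Finset N, v S ↔ ∀ l, u l S := by
  classical
  obtain ⟨hmono, hempty, huniv⟩ := hv
  let e : Fin (Fintype.card (Finset N)) ≃ Finset N := (Fintype.equivFin (Finset N)).symm
  let T' : Finset N → Finset N := fun T => if IsMaxLosing v T then T else ∅
  refine ⟨Fintype.card (Finset N), fun l S => ¬ S ⊆ T' (e l), fun l => weighted_notsubset _, fun S => ?_⟩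
  constructor
  · intro hvS l hsub
    by_cases hML : IsMaxLosing v (e l)
    · have : T' (e l) = e l := if_pos hML
      rw [this] at hsub
      exact hML.1 (hmono S (e l) hsub hvS)
    · have : T' (e l) = ∅ := if_neg hML
      rw [this, Finset.subset_empty] at hsub
      subst hsub
      exact hempty hvS
  · intro h
    by_contra hvS
    obtain ⟨T, hML, hsub⟩ := exists_maxLosing v S hvS
    have := h (e.symm T)
    simp only [e.apply_symm_apply] at this
    have hT' : T' T = T := if_pos hML
    rw [hT'] at this
    exact this hsub
end

section
/- The complete simple game on 6 players whose maximal losing coalitions are exactly {1,3,5}, {1,3,6}, {1,4,5}, {1,4,6}, {2,3,5}, {2,3,6}, {2,4,5}, {2,4,6} is not weighted, witnessed by the 2-trade ⟨{1,2},{3,4,5,6}; {1,3,5},{2,4,6}⟩. -/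
/-- The complete simple game on 6 players (0-indexed) with the eight listed maximal
losing coalitions is not weighted; witness: the 2-trade
⟨{0,1},{2,3,4,5}; {0,2,4},{1,3,5}⟩. -/
theorem example_game_not_weighted :
    let L : Finset (Finset (Fin 6)) :=
      {{0,2,4}, {0,2,5}, {0,3,4}, {0,3,5}, {1,2,4}, {1,2,5}, {1,3,4}, {1,3,5}}
    let v : Finset (Fin 6) → Prop := fun S => ¬ ∃ T ∈ L, S ⊆ T
    v {0,1} ∧ v {2,3,4,5} ∧ ¬ v {0,2,4} ∧ ¬ v {1,3,5} ∧
    (∀ i : Fin 6,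
      ((if i ∈ ({0,1} : Finset (Fin 6)) then 1 else 0) +
        (if i ∈ ({2,3,4,5} : Finset (Fin 6)) then 1 else 0) : ℕ) =
      (if i ∈ ({0,2,4} : Finset (Fin 6)) then 1 else 0) +
        (if i ∈ ({1,3,5} : Finset (Fin 6)) then 1 else 0)) ∧
    ¬ IsWeighted v := by
  intro L v
  refine ⟨by decide, by decide, by decide, by decide, by decide, ?_⟩
  rintro ⟨w, q, hq, hw, hvs⟩
  have h1 : q ≤ ∑ i ∈ ({0,1} : Finset (Fin 6)), w i := (hvs _).1 (by decide)
  have h2 : q ≤ ∑ i ∈ ({2,3,4,5} : Finset (Fin 6)), w i := (hvs _).1 (by decide)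
  have h3 : ¬ q ≤ ∑ i ∈ ({0,2,4} : Finset (Fin 6)), w i := fun h => (by decide : ¬ v {0,2,4}) ((hvs _).2 h)
  have h4 : ¬ q ≤ ∑ i ∈ ({1,3,5} : Finset (Fin 6)), w i := fun h => (by decide : ¬ v {1,3,5}) ((hvs _).2 h)
  push_neg at h3 h4
  have e1 : ∑ i ∈ ({0,1} : Finset (Fin 6)), w i = w 0 + w 1 := by
    simp [Finset.sum_insert, Finset.mem_insert]
  have e2 : ∑ i ∈ ({2,3,4,5} : Finset (Fin 6)), w i = w 2 + w 3 + w 4 + w 5 := by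
    simp [Finset.sum_insert, Finset.mem_insert]; ring
  have e3 : ∑ i ∈ ({0,2,4} : Finset (Fin 6)), w i = w 0 + w 2 + w 4 := by
    simp [Finset.sum_insert, Finset.mem_insert]; ring
  have e4 : ∑ i ∈ ({1,3,5} : Finset (Fin 6)), w i = w 1 + w 3 + w 5 := by
    simp [Finset.sum_insert, Finset.mem_insert]; ring
  rw [e1] at h1; rw [e2] at h2; rw [e3] at h3; rw [e4] at h4
  linarith
end

section
/- Suppose v is a simple game with losing coalitions T_1,...,T_k such that for every pair i ≠ j there is no weighted game in which all winning coalitions of v are winning and both T_i and T_j are losing. If v equals the intersection of m weighted games, then m ≥ k. -/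
/-- If v has k losing coalitions which are pairwise incompatible (no weighted game
keeps all winning coalitions of v winning while both are losing), then any
representation of v as an intersection of m weighted games has m ≥ k. -/
theorem pairwise_incompatible_lower_bound {N : Type*} [Fintype N] [DecidableEq N]
    (v : Finset N → Prop) (hv : IsSimpleGame v)
    (k : ℕ) (T : Fin k → Finset N) (hT : ∀ i, ¬ v (T i))
    (hpair : ∀ i j : Fin k, i ≠ j →
      ¬ ∃ u : Finset N → Prop, IsWeighted u ∧
        (∀ S : Finset N, v S → u S) ∧ ¬ u (T i) ∧ ¬ u (T j))
    (m : ℕ) (u : Fin m → (Finset N → Prop))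
    (hu : ∀ l, IsWeighted (u l))
    (hrep : ∀ S : Finset N, v S ↔ ∀ l, u l S) :
    k ≤ m := by
  have hex : ∀ i : Fin k, ∃ l : Fin m, ¬ u l (T i) := by
    intro i
    by_contra h
    push_neg at h
    exact hT i ((hrep (T i)).mpr h)
  choose f hf using hex
  have hinj : Function.Injective f := by
    intro i j hij
    by_contra hne
    exact hpair i j hne ⟨u (f i), hu (f i),
      fun S hS => (hrep S).mp hS (f i), hf i, hij ▸ hf j⟩
  simpa using Fintype.card_le_of_injective f hinj
end

section
/- If there exist winning coalitions S_1, S_2 of a simple game v and losing coalitions T_i, T_j such that every player appears in exactly as many of S_1, S_2 as of T_i, T_j, then there is no weighted game u in which every winning coalition of v is winning and both T_i and T_j are losing. -/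
/-- A 2-trade between two winning coalitions of v and two losing coalitions Tᵢ, Tⱼ
certifies that no weighted game keeps all winning coalitions of v winning while
having both Tᵢ and Tⱼ losing. -/
theorem two_trade_incompatibility {N : Type*} [Fintype N] [DecidableEq N]
    (v : Finset N → Prop) (hv : IsSimpleGame v)
    (S₁ S₂ Ti Tj : Finset N) (hS₁ : v S₁) (hS₂ : v S₂)
    (hTi : ¬ v Ti) (hTj : ¬ v Tj)
    (htrade : ∀ i : N,
      ((if i ∈ S₁ then 1 else 0) + (if i ∈ S₂ then 1 else 0) : ℕ) =
      (if i ∈ Ti then 1 else 0) + (if i ∈ Tj then 1 else 0)) :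
    ¬ ∃ u : Finset N → Prop, IsWeighted u ∧
      (∀ S : Finset N, v S → u S) ∧ ¬ u Ti ∧ ¬ u Tj := by
  rintro ⟨u, ⟨w, q, hq, hw, hu⟩, hmono, hui, huj⟩
  have h1 : q ≤ ∑ i ∈ S₁, w i := (hu S₁).1 (hmono S₁ hS₁)
  have h2 : q ≤ ∑ i ∈ S₂, w i := (hu S₂).1 (hmono S₂ hS₂)
  have h3 : ∑ i ∈ Ti, w i < q := lt_of_not_ge (fun h => hui ((hu Ti).2 h))
  have h4 : ∑ i ∈ Tj, w i < q := lt_of_not_ge (fun h => huj ((hu Tj).2 h))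
  have key : ∑ i ∈ S₁, w i + ∑ i ∈ S₂, w i = ∑ i ∈ Ti, w i + ∑ i ∈ Tj, w i := by
    have e : ∀ S : Finset N, ∑ i ∈ S, w i = ∑ i : N, (if i ∈ S then w i else 0) := by
      intro S
      rw [Finset.sum_ite_mem, Finset.univ_inter]
    rw [e S₁, e S₂, e Ti, e Tj, ← Finset.sum_add_distrib, ← Finset.sum_add_distrib]
    apply Finset.sum_congr rfl
    intro i _
    have := htrade i
    split_ifs at this ⊢ <;> first | (exfalso; omega) | ring
  linarith
end
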